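/- Let A be a Hopf algebra over a commutative ring k with comultiplication Δ (an algebra homomorphism A → A⊗A), counit ε and antipode S. Let u be a unit of A and F a unit of A⊗A such that: (i) S(S(a)) = u·a·u⁻¹ for all a ∈ A; (ii) Δ(u) = F⁻¹·(u⊗u) = (u⊗u)·F⁻¹; (iii) ε(u) = 1. Then the following are equivalent: (1) there exists a central unit v of A such that v·v = u·S(u), S(v) = v, ε(v) = 1 and Δ(v) = F⁻¹·(v⊗v); (2) there exists a unit g of A such that Δ(g) = g⊗g, g·g = S(u⁻¹)·u and S(S(a)) = g·a·g⁻¹ for all a ∈ A. -/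

import Mathlib

open TensorProduct Coalgebra Bialgebra HopfAlgebra

namespace RibbonAux


variable {R A : Type*} [CommSemiring R] [Semiring A] [HopfAlgebra R A]

lemma my_antipode_one {R A : Type*} [CommSemiring R] [Semiring A] [HopfAlgebra R A] :
    antipode (R := R) (1 : A) = 1 := by
  have := mul_antipode_rTensor_comul_apply (R := R) (1 : A)
  simpa [Algebra.TensorProduct.one_def] using this

lemma my_sum_counit_right_smul {ι : Type*} {a : A} (r : Coalgebra.Repr R a ι) :
    ∑ i ∈ r.index, counit (R := R) (r.right i) • r.left i = a := by
  have h := congrArg (TensorProduct.rid R A) (Coalgebra.sum_tmul_counit_eq r)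
  rw [map_sum] at h
  simp only [TensorProduct.rid_tmul, one_smul] at h
  exact h

/-- the triple multiplication map -/
noncomputable def mu3 : A ⊗[R] (A ⊗[R] A) →ₗ[R] A :=
  LinearMap.mul' R A ∘ₗ LinearMap.lTensor A (LinearMap.mul' R A)

@[simp] lemma mu3_tmul (x y z : A) : mu3 (R := R) (x ⊗ₜ[R] (y ⊗ₜ[R] z)) = x * (y * z) := rfl

lemma collapseB {ι κ : Type*} (x y b : A) (rb : Coalgebra.Repr R b ι)
    (rlb : ∀ j, Coalgebra.Repr R (rb.left j) κ) :
    ∑ j ∈ rb.index, ∑ q ∈ (rlb j).index,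
      antipode (R := R) (x * (rlb j).left q) *
        ((y * (rlb j).right q) * antipode (R := R) (rb.right j))
      = antipode (R := R) (x * b) * y := by
  classical
  set S : A →ₗ[R] A := antipode (R := R) with hS
  let rrb : ∀ j, Coalgebra.Repr R (rb.right j) (A × A) := fun j => ℛ R _
  have key := Coalgebra.sum_map_tmul_tmul_eq
    (f := S ∘ₗ LinearMap.mulLeft R x) (g := LinearMap.mulLeft R y) (h := S)
    b (repr := rb) (a₁ := rlb) (a₂ := rrb)
  have key' := congrArg (mu3 (R := R) (A := A)) key
  simp only [map_sum, mu3_tmul, LinearMap.comp_apply, LinearMap.mulLeft_apply] at key'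
  rw [← key']
  calc ∑ j ∈ rb.index, ∑ q ∈ (rrb j).index,
        S (x * rb.left j) * ((y * (rrb j).left q) * S ((rrb j).right q))
      = ∑ j ∈ rb.index, counit (R := R) (rb.right j) • (S (x * rb.left j) * y) := by
        refine Finset.sum_congr rfl fun j _ => ?_
        calc ∑ q ∈ (rrb j).index, S (x * rb.left j) * ((y * (rrb j).left q) * S ((rrb j).right q))
            = S (x * rb.left j) * (y * ∑ q ∈ (rrb j).index,
                (rrb j).left q * S ((rrb j).right q)) := by
              rw [Finset.mul_sum, Finset.mul_sum]
              simp only [mul_assoc]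
          _ = counit (R := R) (rb.right j) • (S (x * rb.left j) * y) := by
              rw [HopfAlgebra.sum_mul_antipode_eq_smul (rrb j)]
              rw [mul_smul_comm, mul_one, mul_smul_comm]
    _ = S (x * b) * y := by
        conv_rhs => rw [← my_sum_counit_right_smul rb]
        rw [Finset.mul_sum, map_sum, Finset.sum_mul]
        refine Finset.sum_congr rfl fun j _ => ?_
        rw [mul_smul_comm, map_smul, smul_mul_assoc]

lemma collapseA {ι κ : Type*} (b a : A) (ra : Coalgebra.Repr R a ι)
    (rla : ∀ i, Coalgebra.Repr R (ra.left i) κ) :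
    ∑ i ∈ ra.index, ∑ p ∈ (rla i).index,
      antipode (R := R) ((rla i).left p * b) *
        ((rla i).right p * antipode (R := R) (ra.right i))
      = antipode (R := R) (a * b) := by
  classical
  set S : A →ₗ[R] A := antipode (R := R) with hS
  let rra : ∀ i, Coalgebra.Repr R (ra.right i) (A × A) := fun i => ℛ R _
  have key := Coalgebra.sum_map_tmul_tmul_eq
    (f := S ∘ₗ LinearMap.mulRight R b) (g := LinearMap.id) (h := S)
    a (repr := ra) (a₁ := rla) (a₂ := rra)
  have key' := congrArg (mu3 (R := R) (A := A)) key
  simp only [map_sum, mu3_tmul, LinearMap.comp_apply, LinearMap.mulRight_apply,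
    LinearMap.id_coe, id_eq] at key'
  rw [← key']
  calc ∑ i ∈ ra.index, ∑ q ∈ (rra i).index,
        S (ra.left i * b) * ((rra i).left q * S ((rra i).right q))
      = ∑ i ∈ ra.index, counit (R := R) (ra.right i) • S (ra.left i * b) := by
        refine Finset.sum_congr rfl fun i _ => ?_
        rw [← Finset.mul_sum, HopfAlgebra.sum_mul_antipode_eq_smul (rra i),
          mul_smul_comm, mul_one]
    _ = S (a * b) := by
        conv_rhs => rw [← my_sum_counit_right_smul ra]
        rw [Finset.sum_mul, map_sum]
        refine Finset.sum_congr rfl fun i _ => ?_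
        rw [smul_mul_assoc, map_smul]

lemma my_sum_counit_left_smul {ι : Type*} {a : A} (r : Coalgebra.Repr R a ι) :
    ∑ i ∈ r.index, counit (R := R) (r.left i) • r.right i = a := by
  have h := congrArg (TensorProduct.lid R A) (Coalgebra.sum_counit_tmul_eq r)
  rw [map_sum] at h
  simp only [TensorProduct.lid_tmul, one_smul] at h
  exact h

/-- product representation -/
noncomputable def mulRepr {ι κ : Type*} {x y : A} (rx : Coalgebra.Repr R x ι) (ry : Coalgebra.Repr R y κ) :
    Coalgebra.Repr R (x * y) (ι × κ) where
  index := rx.index ×ˢ ry.index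
  left := fun p => rx.left p.1 * ry.left p.2
  right := fun p => rx.right p.1 * ry.right p.2
  eq := by
    rw [Finset.sum_product]
    simp only [← Algebra.TensorProduct.tmul_mul_tmul]
    rw [← Finset.sum_mul_sum, rx.eq, ry.eq, Bialgebra.comul_mul]

lemma my_antipode_mul (a b : A) :
    antipode (R := R) (a * b) = antipode (R := R) b * antipode (R := R) a := by
  classical
  set S : A →ₗ[R] A := antipode (R := R) with hS
  let ra := ℛ R a
  let rb := ℛ R b
  let rla : ∀ i, Coalgebra.Repr R (ra.left i) (A × A) := fun i => ℛ R _
  let rlb : ∀ j, Coalgebra.Repr R (rb.left j) (A × A) := fun j => ℛ R _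
  have hSa : S a = ∑ i ∈ ra.index, counit (R := R) (ra.left i) • S (ra.right i) := by
    conv_lhs => rw [← my_sum_counit_left_smul ra]
    rw [map_sum]
    simp only [map_smul]
  have hSb : S b = ∑ j ∈ rb.index, counit (R := R) (rb.left j) • S (rb.right j) := by
    conv_lhs => rw [← my_sum_counit_left_smul rb]
    rw [map_sum]
    simp only [map_smul]
  symm
  calc S b * S a
      = ∑ j ∈ rb.index, ∑ i ∈ ra.index,
          (counit (R := R) (rb.left j) * counit (R := R) (ra.left i)) •
            (S (rb.right j) * S (ra.right i)) := by
        rw [hSa, hSb, Finset.sum_mul_sum]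
        exact Finset.sum_congr rfl fun j _ => Finset.sum_congr rfl fun i _ =>
          (smul_mul_smul_comm _ _ _ _)
    _ = ∑ i ∈ ra.index, ∑ j ∈ rb.index, ∑ p ∈ (rla i).index, ∑ q ∈ (rlb j).index,
          S ((rla i).left p * (rlb j).left q) *
            (((rla i).right p * (rlb j).right q) * (S (rb.right j) * S (ra.right i))) := by
        rw [Finset.sum_comm]
        refine Finset.sum_congr rfl fun i _ => Finset.sum_congr rfl fun j _ => ?_
        have e1 : counit (R := R) (rb.left j) * counit (R := R) (ra.left i)
            = counit (R := R) (ra.left i * rb.left j) := by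
          rw [Bialgebra.counit_mul, mul_comm]
        rw [e1, ← one_mul (S (rb.right j) * S (ra.right i)), ← smul_mul_assoc,
          ← HopfAlgebra.sum_antipode_mul_eq_smul (mulRepr (rla i) (rlb j)),
          Finset.sum_mul]
        simp only [mulRepr]
        rw [Finset.sum_product]
        exact Finset.sum_congr rfl fun p _ => Finset.sum_congr rfl fun q _ => by
          simp only [mul_assoc, one_mul, hS]
    _ = ∑ i ∈ ra.index, ∑ p ∈ (rla i).index,
          (S ((rla i).left p * b) * (rla i).right p) * S (ra.right i) := by
        refine Finset.sum_congr rfl fun i _ => ?_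
        rw [Finset.sum_comm]
        refine Finset.sum_congr rfl fun p _ => ?_
        rw [← collapseB ((rla i).left p) ((rla i).right p) b rb rlb, Finset.sum_mul]
        refine Finset.sum_congr rfl fun j _ => ?_
        rw [Finset.sum_mul]
        refine Finset.sum_congr rfl fun q _ => ?_
        simp only [mul_assoc, hS]
    _ = S (a * b) := by
        rw [← collapseA b a ra rla]
        exact Finset.sum_congr rfl fun i _ => Finset.sum_congr rfl fun p _ => by
          rw [mul_assoc]



variable {k A : Type*} [CommRing k] [Ring A] [HopfAlgebra k A]

lemma counit_grouplike (g : Aˣ) (hg : comul (R := k) (g : A) = (g : A) ⊗ₜ[k] (g : A)) :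
    counit (R := k) (g : A) = 1 := by
  have h1 : counit (R := k) (g : A) • (g : A) = (g : A) := by
    have h0 := Coalgebra.rTensor_counit_comul (R := k) (g : A)
    rw [hg] at h0
    have h2 := congrArg (TensorProduct.lid k A) h0
    simpa using h2
  have hsq : counit (R := k) (g : A) * counit (R := k) (g : A) = counit (R := k) (g : A) := by
    have := congrArg (counit (R := k)) h1
    simpa [smul_eq_mul] using this
  have hunit : counit (R := k) (g : A) * counit (R := k) ((↑g⁻¹ : A)) = 1 := by
    rw [← Bialgebra.counit_mul, Units.mul_inv, Bialgebra.counit_one]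
  linear_combination (counit (R := k) (↑g⁻¹ : A)) * hsq + hunit
    - (counit (R := k) (g : A)) * hunit

lemma antipode_grouplike (g : Aˣ) (hg : comul (R := k) (g : A) = (g : A) ⊗ₜ[k] (g : A)) :
    antipode (R := k) (g : A) = (↑g⁻¹ : A) := by
  have h := mul_antipode_rTensor_comul_apply (R := k) (g : A)
  rw [hg, counit_grouplike g hg] at h
  simp only [LinearMap.rTensor_tmul, LinearMap.mul'_apply, map_one] at h
  calc antipode (R := k) (g : A) = antipode (R := k) (g : A) * ((g : A) * ↑g⁻¹) := by
        rw [Units.mul_inv, mul_one]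
    _ = (antipode (R := k) (g : A) * (g : A)) * ↑g⁻¹ := by rw [mul_assoc]
    _ = ↑g⁻¹ := by rw [h, one_mul]

lemma comul_inv_grouplike (g : Aˣ) (hg : comul (R := k) (g : A) = (g : A) ⊗ₜ[k] (g : A)) :
    comul (R := k) (↑g⁻¹ : A) = (↑g⁻¹ : A) ⊗ₜ[k] (↑g⁻¹ : A) := by
  have h1 : comul (R := k) (g : A) * comul (R := k) (↑g⁻¹ : A) = 1 := by
    rw [← Bialgebra.comul_mul, Units.mul_inv, Bialgebra.comul_one]
  calc comul (R := k) (↑g⁻¹ : A)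
      = (((↑g⁻¹ : A) ⊗ₜ[k] (↑g⁻¹ : A)) * ((g : A) ⊗ₜ[k] (g : A))) * comul (R := k) (↑g⁻¹ : A) := by
        rw [Algebra.TensorProduct.tmul_mul_tmul, Units.inv_mul,
          ← Algebra.TensorProduct.one_def, one_mul]
    _ = ((↑g⁻¹ : A) ⊗ₜ[k] (↑g⁻¹ : A)) *
          (comul (R := k) (g : A) * comul (R := k) (↑g⁻¹ : A)) := by
        rw [mul_assoc, hg]
    _ = (↑g⁻¹ : A) ⊗ₜ[k] (↑g⁻¹ : A) := by rw [h1, mul_one]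

lemma tmul_central {c : A} (hc : ∀ x : A, c * x = x * c) (z : A ⊗[k] A) :
    (c ⊗ₜ[k] c) * z = z * (c ⊗ₜ[k] c) := by
  induction z using TensorProduct.induction_on with
  | zero => simp
  | tmul x y => rw [Algebra.TensorProduct.tmul_mul_tmul, Algebra.TensorProduct.tmul_mul_tmul,
      hc, hc]
  | add x y hx hy => rw [mul_add, add_mul, hx, hy]


end RibbonAux

section Main

variable {k A : Type*} [CommRing k] [Ring A] [HopfAlgebra k A]

theorem ribbon_iff_grouplike' (u : Aˣ) (F : (A ⊗[k] A)ˣ)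
    (hu : ∀ a : A, antipode (R := k) (antipode (R := k) a) = (u : A) * a * (↑u⁻¹ : A))
    (hΔu : comul (R := k) (u : A) = (↑F⁻¹ : A ⊗[k] A) * ((u : A) ⊗ₜ[k] (u : A)) ∧
      comul (R := k) (u : A) = ((u : A) ⊗ₜ[k] (u : A)) * (↑F⁻¹ : A ⊗[k] A))
    (hεu : counit (R := k) (u : A) = 1) :
    (∃ v : Aˣ,
      (∀ x : A, (v : A) * x = x * (v : A)) ∧
      (v : A) * (v : A) = (u : A) * antipode (R := k) (u : A) ∧
      antipode (R := k) (v : A) = (v : A) ∧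
      counit (R := k) (v : A) = 1 ∧
      comul (R := k) (v : A) = (↑F⁻¹ : A ⊗[k] A) * ((v : A) ⊗ₜ[k] (v : A))) ↔
    (∃ g : Aˣ,
      comul (R := k) (g : A) = (g : A) ⊗ₜ[k] (g : A) ∧
      (g : A) * (g : A) = antipode (R := k) (↑u⁻¹ : A) * (u : A) ∧
      ∀ a : A, antipode (R := k) (antipode (R := k) a) = (g : A) * a * (↑g⁻¹ : A)) := by
  classical
  have Sone : antipode (R := k) (1 : A) = 1 := RibbonAux.my_antipode_one
  have Smul : ∀ x y : A, antipode (R := k) (x * y)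
      = antipode (R := k) y * antipode (R := k) x := RibbonAux.my_antipode_mul
  -- `S u` as a unit
  set Su : Aˣ :=
    { val := antipode (R := k) (u : A)
      inv := antipode (R := k) (↑u⁻¹ : A)
      val_inv := by rw [← Smul, Units.inv_mul, Sone]
      inv_val := by rw [← Smul, Units.mul_inv, Sone] } with hSu
  have Su_coe : (Su : A) = antipode (R := k) (u : A) := rfl
  have Su_inv_coe : (↑Su⁻¹ : A) = antipode (R := k) (↑u⁻¹ : A) := rfl
  -- key identity from applying S to the S² formula
  have hstar : ∀ x : A, (u : A) * antipode (R := k) x * (↑u⁻¹ : A)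
      = antipode (R := k) (↑u⁻¹ : A) * (antipode (R := k) x * antipode (R := k) (u : A)) := by
    intro x
    have h1 := hu (antipode (R := k) x)
    have h2 := congrArg (antipode (R := k)) (hu x)
    rw [Smul, Smul] at h2
    exact h1.symm.trans h2
  have hsurj : ∀ b : A, ∃ x : A, antipode (R := k) x = b := by
    intro b
    refine ⟨antipode (R := k) ((↑u⁻¹ : A) * b * (u : A)), ?_⟩
    rw [hu]
    simp [mul_assoc]
  -- `S(u) * u` is central
  have hC : ∀ b : A, (antipode (R := k) (u : A) * (u : A)) * b
      = b * (antipode (R := k) (u : A) * (u : A)) := by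
    intro b
    obtain ⟨x, rfl⟩ := hsurj b
    have h := hstar x
    have e1 : (antipode (R := k) (u : A) * (u : A)) * antipode (R := k) x
        = antipode (R := k) (u : A) * (((u : A) * antipode (R := k) x * (↑u⁻¹ : A)) * (u : A)) := by
      simp [mul_assoc]
    rw [e1, h]
    have e2 : antipode (R := k) (u : A) * antipode (R := k) (↑u⁻¹ : A) = 1 := Su.val_inv
    calc antipode (R := k) (u : A)
          * ((antipode (R := k) (↑u⁻¹ : A) * (antipode (R := k) x * antipode (R := k) (u : A)))
            * (u : A))
        = (antipode (R := k) (u : A) * antipode (R := k) (↑u⁻¹ : A))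
            * (antipode (R := k) x * (antipode (R := k) (u : A) * (u : A))) := by
          simp only [mul_assoc]
      _ = antipode (R := k) x * (antipode (R := k) (u : A) * (u : A)) := by rw [e2, one_mul]
  -- `u` and `S u` commute
  have hcomm : (u : A) * antipode (R := k) (u : A) = antipode (R := k) (u : A) * (u : A) := by
    have h := hC (↑u⁻¹ : A)
    have e : antipode (R := k) (u : A) = (↑u⁻¹ : A) * (antipode (R := k) (u : A) * (u : A)) := by
      rw [← h]; simp [mul_assoc]
    conv_lhs => rw [e]
    rw [Units.mul_inv_cancel_left]
  have commUSu : Commute u Su := Units.ext (by simpa [Units.val_mul] using hcomm)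
  constructor
  · rintro ⟨v, hvc, hv2, hvS, hvε, hvΔ⟩
    have hvinv : ∀ x : A, (↑v⁻¹ : A) * x = x * (↑v⁻¹ : A) := by
      intro x
      calc (↑v⁻¹ : A) * x = (↑v⁻¹ : A) * (x * (v : A)) * (↑v⁻¹ : A) := by simp [mul_assoc]
        _ = (↑v⁻¹ : A) * ((v : A) * x) * (↑v⁻¹ : A) := by rw [← hvc x]
        _ = x * (↑v⁻¹ : A) := by simp [mul_assoc]
    have hKuv : Commute u v := Units.ext (by simpa [Units.val_mul] using (hvc (u : A)).symm)
    have hv2U : v * v = u * Su := Units.ext (by simpa [Units.val_mul] using hv2)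
    refine ⟨u * v⁻¹, ?_, ?_, ?_⟩
    · -- grouplike
      have e : (↑(u * v⁻¹) : A) * (v : A) = (u : A) := by
        simp [Units.val_mul, mul_assoc]
      have hgv : comul (R := k) (↑(u * v⁻¹) : A) * comul (R := k) (v : A)
          = ((u : A) ⊗ₜ[k] (u : A)) * (↑F⁻¹ : A ⊗[k] A) := by
        rw [← Bialgebra.comul_mul, e]; exact hΔu.2
      rw [hvΔ] at hgv
      have hone : ((v : A) ⊗ₜ[k] (v : A)) * ((↑v⁻¹ : A) ⊗ₜ[k] (↑v⁻¹ : A)) = 1 := by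
        rw [Algebra.TensorProduct.tmul_mul_tmul, Units.mul_inv, ← Algebra.TensorProduct.one_def]
      have cancel : ((↑F⁻¹ : A ⊗[k] A) * ((v : A) ⊗ₜ[k] (v : A)))
          * (((↑v⁻¹ : A) ⊗ₜ[k] (↑v⁻¹ : A)) * (↑F : A ⊗[k] A)) = 1 := by
        calc ((↑F⁻¹ : A ⊗[k] A) * ((v : A) ⊗ₜ[k] (v : A)))
            * (((↑v⁻¹ : A) ⊗ₜ[k] (↑v⁻¹ : A)) * (↑F : A ⊗[k] A))
            = (↑F⁻¹ : A ⊗[k] A) * ((((v : A) ⊗ₜ[k] (v : A))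
                * ((↑v⁻¹ : A) ⊗ₜ[k] (↑v⁻¹ : A))) * (↑F : A ⊗[k] A)) := by
              simp only [mul_assoc]
          _ = (↑F⁻¹ : A ⊗[k] A) * (↑F : A ⊗[k] A) := by rw [hone, one_mul]
          _ = 1 := F.inv_mul
      calc comul (R := k) (↑(u * v⁻¹) : A)
          = (comul (R := k) (↑(u * v⁻¹) : A)
              * ((↑F⁻¹ : A ⊗[k] A) * ((v : A) ⊗ₜ[k] (v : A))))
              * (((↑v⁻¹ : A) ⊗ₜ[k] (↑v⁻¹ : A)) * (↑F : A ⊗[k] A)) := by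
            rw [mul_assoc, cancel, mul_one]
        _ = (((u : A) ⊗ₜ[k] (u : A)) * (↑F⁻¹ : A ⊗[k] A))
              * (((↑v⁻¹ : A) ⊗ₜ[k] (↑v⁻¹ : A)) * (↑F : A ⊗[k] A)) := by rw [hgv]
        _ = ((u : A) ⊗ₜ[k] (u : A)) * (((↑F⁻¹ : A ⊗[k] A)
              * ((↑v⁻¹ : A) ⊗ₜ[k] (↑v⁻¹ : A))) * (↑F : A ⊗[k] A)) := by
            simp only [mul_assoc]
        _ = ((u : A) ⊗ₜ[k] (u : A)) * ((((↑v⁻¹ : A) ⊗ₜ[k] (↑v⁻¹ : A))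
              * (↑F⁻¹ : A ⊗[k] A)) * (↑F : A ⊗[k] A)) := by
            rw [RibbonAux.tmul_central hvinv]
        _ = ((u : A) ⊗ₜ[k] (u : A)) * ((↑v⁻¹ : A) ⊗ₜ[k] (↑v⁻¹ : A)) := by
            rw [mul_assoc, F.inv_mul, mul_one]
        _ = (↑(u * v⁻¹) : A) ⊗ₜ[k] (↑(u * v⁻¹) : A) := by
            rw [Algebra.TensorProduct.tmul_mul_tmul, Units.val_mul]
    · -- square
      have key : (u * v⁻¹) * (u * v⁻¹) = Su⁻¹ * u := by
        have h1 : u * v⁻¹ = v⁻¹ * u := (hKuv.inv_right).eq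
        calc (u * v⁻¹) * (u * v⁻¹) = u * ((v⁻¹ * u) * v⁻¹) := by simp [mul_assoc]
          _ = u * ((u * v⁻¹) * v⁻¹) := by rw [← h1]
          _ = (u * u) * (v * v)⁻¹ := by simp [mul_assoc, mul_inv_rev]
          _ = (u * u) * (u * Su)⁻¹ := by rw [hv2U]
          _ = u * ((u * Su⁻¹) * u⁻¹) := by simp [mul_assoc, mul_inv_rev]
          _ = u * ((Su⁻¹ * u) * u⁻¹) := by rw [(commUSu.inv_right).eq]
          _ = u * Su⁻¹ := by simp [mul_assoc]
          _ = Su⁻¹ * u := (commUSu.inv_right).eq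
      have := congrArg (Units.val) key
      simpa [Units.val_mul, Su_inv_coe] using this
    · -- conjugation
      intro a
      rw [hu a]
      have h3 : (↑v⁻¹ : A) * a * (v : A) = a := by
        rw [hvinv a]; simp [mul_assoc]
      have h4 : (↑(u * v⁻¹)⁻¹ : A) = (v : A) * (↑u⁻¹ : A) := by
        rw [mul_inv_rev, inv_inv, Units.val_mul]
      calc (u : A) * a * (↑u⁻¹ : A)
          = (u : A) * ((↑v⁻¹ : A) * a * (v : A)) * (↑u⁻¹ : A) := by rw [h3]
        _ = (↑(u * v⁻¹) : A) * a * (↑(u * v⁻¹)⁻¹ : A) := by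
            rw [h4, Units.val_mul]; simp only [mul_assoc]
  · rintro ⟨g, hgΔ, hg2, hgS2⟩
    have hεg : counit (R := k) (g : A) = 1 := RibbonAux.counit_grouplike g hgΔ
    have hΔginv : comul (R := k) (↑g⁻¹ : A) = (↑g⁻¹ : A) ⊗ₜ[k] (↑g⁻¹ : A) :=
      RibbonAux.comul_inv_grouplike g hgΔ
    have hεginv : counit (R := k) (↑g⁻¹ : A) = 1 := by
      simpa using RibbonAux.counit_grouplike g⁻¹ hΔginv
    have hSginv : antipode (R := k) (↑g⁻¹ : A) = (g : A) := by
      have := RibbonAux.antipode_grouplike g⁻¹ hΔginv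
      simpa using this
    -- u and g commute
    have hKug : Commute u g := by
      have h1 := (hu (g : A)).symm.trans (hgS2 (g : A))
      have h2 : (u : A) * (g : A) * (↑u⁻¹ : A) = (g : A) := by
        rw [h1]; simp [mul_assoc]
      have h3 : (u : A) * (g : A) = (g : A) * (u : A) := by
        have := congrArg (fun z => z * (u : A)) h2
        simpa [mul_assoc] using this
      exact Units.ext (by simpa [Units.val_mul] using h3)
    -- g and Su commute
    have hKgSu : Commute g Su := by
      have c1 : Commute (Su * u) g := Units.ext (by
        simpa [Units.val_mul] using (hC (g : A)))
      have c2 : Commute g u := hKug.symm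
      have := (c1.symm).mul_right (c2.inv_right)
      rwa [mul_inv_cancel_right] at this
    have hg2U : g * g = Su⁻¹ * u := Units.ext (by simpa [Units.val_mul, Su_inv_coe] using hg2)
    refine ⟨g⁻¹ * u, ?_, ?_, ?_, ?_, ?_⟩
    · -- central
      intro x
      have h := (hu x).symm.trans (hgS2 x)
      calc (↑(g⁻¹ * u) : A) * x
          = (↑g⁻¹ : A) * ((u : A) * x * (↑u⁻¹ : A)) * (u : A) := by
            rw [Units.val_mul]; simp [mul_assoc]
        _ = (↑g⁻¹ : A) * ((g : A) * x * (↑g⁻¹ : A)) * (u : A) := by rw [h]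
        _ = x * (↑(g⁻¹ * u) : A) := by rw [Units.val_mul]; simp [mul_assoc]
    · -- square
      have key : (g⁻¹ * u) * (g⁻¹ * u) = u * Su := by
        have h1 : u * g⁻¹ = g⁻¹ * u := (hKug.inv_right).eq
        calc (g⁻¹ * u) * (g⁻¹ * u) = g⁻¹ * ((u * g⁻¹) * u) := by simp [mul_assoc]
          _ = g⁻¹ * ((g⁻¹ * u) * u) := by rw [h1]
          _ = (g * g)⁻¹ * (u * u) := by simp [mul_assoc, mul_inv_rev]
          _ = (Su⁻¹ * u)⁻¹ * (u * u) := by rw [hg2U]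
          _ = u⁻¹ * ((Su * u) * u) := by simp [mul_assoc, mul_inv_rev]
          _ = u⁻¹ * ((u * Su) * u) := by rw [commUSu.eq]
          _ = Su * u := by simp [mul_assoc]
          _ = u * Su := commUSu.eq.symm
      have := congrArg (Units.val) key
      simpa [Units.val_mul] using this
    · -- S-invariance
      have key : Su * g = g⁻¹ * u := by
        calc Su * g = g⁻¹ * ((g * Su) * g) := by simp [mul_assoc]
          _ = g⁻¹ * (Su * (g * g)) := by rw [hKgSu.eq]; simp [mul_assoc]
          _ = g⁻¹ * (Su * (Su⁻¹ * u)) := by rw [hg2U]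
          _ = g⁻¹ * u := by rw [mul_inv_cancel_left]
      have keyc := congrArg (Units.val) key
      calc antipode (R := k) (↑(g⁻¹ * u) : A)
          = antipode (R := k) ((↑g⁻¹ : A) * (u : A)) := by rw [Units.val_mul]
        _ = antipode (R := k) (u : A) * antipode (R := k) (↑g⁻¹ : A) := Smul _ _
        _ = antipode (R := k) (u : A) * (g : A) := by rw [hSginv]
        _ = (↑(g⁻¹ * u) : A) := by
            simpa [Units.val_mul] using keyc
    · -- counit
      rw [Units.val_mul, Bialgebra.counit_mul, hεginv, hεu, one_mul]
    · -- comultiplication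
      have hcen : ∀ x : A, (↑(g⁻¹ * u) : A) * x = x * (↑(g⁻¹ * u) : A) := by
        intro x
        have h := (hu x).symm.trans (hgS2 x)
        calc (↑(g⁻¹ * u) : A) * x
            = (↑g⁻¹ : A) * ((u : A) * x * (↑u⁻¹ : A)) * (u : A) := by
              rw [Units.val_mul]; simp [mul_assoc]
          _ = (↑g⁻¹ : A) * ((g : A) * x * (↑g⁻¹ : A)) * (u : A) := by rw [h]
          _ = x * (↑(g⁻¹ * u) : A) := by rw [Units.val_mul]; simp [mul_assoc]
      calc comul (R := k) (↑(g⁻¹ * u) : A)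
          = comul (R := k) (↑g⁻¹ : A) * comul (R := k) (u : A) := by
            rw [Units.val_mul, Bialgebra.comul_mul]
        _ = ((↑g⁻¹ : A) ⊗ₜ[k] (↑g⁻¹ : A))
              * (((u : A) ⊗ₜ[k] (u : A)) * (↑F⁻¹ : A ⊗[k] A)) := by rw [hΔginv, hΔu.2]
        _ = ((↑(g⁻¹ * u) : A) ⊗ₜ[k] (↑(g⁻¹ * u) : A)) * (↑F⁻¹ : A ⊗[k] A) := by
            rw [← mul_assoc, Algebra.TensorProduct.tmul_mul_tmul, Units.val_mul]
        _ = (↑F⁻¹ : A ⊗[k] A) * ((↑(g⁻¹ * u) : A) ⊗ₜ[k] (↑(g⁻¹ * u) : A)) := by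
            rw [RibbonAux.tmul_central hcen]



end Main

/-- Characterization of ribbon elements in a Hopf algebra: given a unit `u`
implementing `S²` by conjugation, with `Δ(u) = F⁻¹(u⊗u) = (u⊗u)F⁻¹` and
`ε(u) = 1`, there is a ribbon element `v` iff there is a group-like unit `g`
with `g² = S(u⁻¹)·u` implementing `S²` by conjugation. -/
theorem ribbon_iff_grouplike {k A : Type*} [CommRing k] [Ring A] [HopfAlgebra k A]
    (u : Aˣ) (F : (A ⊗[k] A)ˣ)
    (hu : ∀ a : A, antipode (R := k) (antipode (R := k) a) = (u : A) * a * (↑u⁻¹ : A))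
    (hΔu : comul (R := k) (u : A) = (↑F⁻¹ : A ⊗[k] A) * ((u : A) ⊗ₜ[k] (u : A)) ∧
      comul (R := k) (u : A) = ((u : A) ⊗ₜ[k] (u : A)) * (↑F⁻¹ : A ⊗[k] A))
    (hεu : counit (R := k) (u : A) = 1) :
    (∃ v : Aˣ,
      (∀ x : A, (v : A) * x = x * (v : A)) ∧
      (v : A) * (v : A) = (u : A) * antipode (R := k) (u : A) ∧
      antipode (R := k) (v : A) = (v : A) ∧
      counit (R := k) (v : A) = 1 ∧
      comul (R := k) (v : A) = (↑F⁻¹ : A ⊗[k] A) * ((v : A) ⊗ₜ[k] (v : A))) ↔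
    (∃ g : Aˣ,
      comul (R := k) (g : A) = (g : A) ⊗ₜ[k] (g : A) ∧
      (g : A) * (g : A) = antipode (R := k) (↑u⁻¹ : A) * (u : A) ∧
      ∀ a : A, antipode (R := k) (antipode (R := k) a) = (g : A) * a * (↑g⁻¹ : A)) := by
  exact ribbon_iff_grouplike' u F hu hΔu hεu
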